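/- Let 0 < α < 1 and β > 0. Define h(x,α) = 0 for |x| < α and h(x,α) = 1 for α ≤ |x| ≤ 1, w(x) = log(1 - tanh²(x/√2)), η(β) = √2·arctanh(√(1-e^{-β})), Λ(β) = (1-α)^{-2} e^{-β} η(β)², and U(x;β) = β for |x| < α, U(x;β) = w(η(β)(|x|-α)/(1-α)) + β for α ≤ |x| ≤ 1. Then U(·;β) is a positive even function on [-1,1], of class C¹ with U(-1;β) = U(1;β) = 0, satisfies U'' + Λ(β) h(x,α) e^U = 0 on (-1,1)\{-α,α}, and ‖U(·;β)‖_∞ = β. -/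

import Mathlib

open Topology Filter

noncomputable def w (x : ℝ) : ℝ := Real.log (1 - Real.tanh (x / Real.sqrt 2) ^ 2)

noncomputable def artanh (x : ℝ) : ℝ := (1 / 2) * Real.log ((1 + x) / (1 - x))

lemma continuous_tanh' : Continuous Real.tanh := by
  have h : Real.tanh = fun x => Real.sinh x / Real.cosh x :=
    funext fun x => Real.tanh_eq_sinh_div_cosh x
  rw [h]
  exact Real.continuous_sinh.div Real.continuous_cosh fun x => (Real.cosh_pos x).ne'

lemma tanh_sq_lt_one (x : ℝ) : Real.tanh x ^ 2 < 1 := by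
  rw [Real.tanh_eq_sinh_div_cosh, div_pow, div_lt_one (by positivity)]
  nlinarith [Real.cosh_sq x]

lemma one_sub_tanh_sq (x : ℝ) : 1 - Real.tanh x ^ 2 = ((Real.cosh x) ^ 2)⁻¹ := by
  rw [Real.tanh_eq_sinh_div_cosh, div_pow]
  have h := (Real.cosh_pos x).ne'
  field_simp
  linarith [Real.cosh_sq x]

lemma w_eq (x : ℝ) : w x = -2 * Real.log (Real.cosh (x / Real.sqrt 2)) := by
  rw [w, one_sub_tanh_sq, Real.log_inv, Real.log_pow]
  push_cast; ring

lemma hasDerivAt_tanh (x : ℝ) :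
    HasDerivAt Real.tanh ((Real.cosh x ^ 2)⁻¹) x := by
  have h : Real.tanh = fun x => Real.sinh x / Real.cosh x :=
    funext fun x => Real.tanh_eq_sinh_div_cosh x
  rw [h]
  have := (Real.hasDerivAt_sinh x).div (Real.hasDerivAt_cosh x) (Real.cosh_pos x).ne'
  refine this.congr_deriv (Eq.symm ?_)
  have h2 := Real.cosh_sq x
  field_simp
  nlinarith

lemma hasDerivAt_w (x : ℝ) :
    HasDerivAt w (-Real.sqrt 2 * Real.tanh (x / Real.sqrt 2)) x := by
  have hs2 : (0:ℝ) < Real.sqrt 2 := by positivity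
  have hlin : HasDerivAt (fun y : ℝ => y / Real.sqrt 2) (1 / Real.sqrt 2) x := by
    simpa using (hasDerivAt_id x).div_const (Real.sqrt 2)
  have hcosh : HasDerivAt (fun y : ℝ => Real.cosh (y / Real.sqrt 2))
      (Real.sinh (x / Real.sqrt 2) * (1 / Real.sqrt 2)) x :=
    (Real.hasDerivAt_cosh _).comp x hlin
  have hlog : HasDerivAt (fun y : ℝ => Real.log (Real.cosh (y / Real.sqrt 2)))
      (Real.sinh (x / Real.sqrt 2) * (1 / Real.sqrt 2) / Real.cosh (x / Real.sqrt 2)) x :=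
    hcosh.log (Real.cosh_pos _).ne'
  have h : w = fun y => -2 * Real.log (Real.cosh (y / Real.sqrt 2)) := funext w_eq
  rw [h]
  refine (hlog.const_mul (-2)).congr_deriv (Eq.symm ?_)
  rw [Real.tanh_eq_sinh_div_cosh]
  have hc := (Real.cosh_pos (x / Real.sqrt 2)).ne'
  field_simp
  ring_nf
  rw [Real.sq_sqrt (by norm_num : (2:ℝ) ≥ 0)]
  ring

lemma tanh_artanh {s : ℝ} (h1 : -1 < s) (h2 : s < 1) : Real.tanh (artanh s) = s := by
  have h1s : (0:ℝ) < 1 - s := by linarith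
  have h1s' : (0:ℝ) < 1 + s := by linarith
  have hr : (0:ℝ) < (1 + s) / (1 - s) := by positivity
  have hE2 : Real.exp (artanh s) ^ 2 = (1 + s) / (1 - s) := by
    rw [← Real.exp_nat_mul, artanh]
    rw [show (2:ℕ) * ((1:ℝ)/2 * Real.log ((1 + s) / (1 - s))) = Real.log ((1+s)/(1-s)) by
      push_cast; ring]
    exact Real.exp_log hr
  have hE : (0:ℝ) < Real.exp (artanh s) := Real.exp_pos _
  rw [Real.tanh_eq_sinh_div_cosh, Real.sinh_eq, Real.cosh_eq, Real.exp_neg]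
  have hEne : Real.exp (artanh s) ≠ 0 := hE.ne'
  have hsum : Real.exp (artanh s) + (Real.exp (artanh s))⁻¹ ≠ 0 := by positivity
  field_simp at hE2 ⊢
  nlinarith [hE2]

lemma w_anti {t u : ℝ} (h : |t| ≤ |u|) : w u ≤ w t := by
  rw [w_eq, w_eq]
  have h2 : Real.cosh (t / Real.sqrt 2) ≤ Real.cosh (u / Real.sqrt 2) := by
    rw [Real.cosh_le_cosh, abs_div, abs_div, abs_of_pos (by positivity : (0:ℝ) < Real.sqrt 2)]
    exact div_le_div_of_nonneg_right h (by positivity)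
  have := Real.log_le_log (Real.cosh_pos _) h2
  linarith

lemma w_anti_strict {t u : ℝ} (h : |t| < |u|) : w u < w t := by
  rw [w_eq, w_eq]
  have h2 : Real.cosh (t / Real.sqrt 2) < Real.cosh (u / Real.sqrt 2) := by
    rw [Real.cosh_lt_cosh, abs_div, abs_div, abs_of_pos (by positivity : (0:ℝ) < Real.sqrt 2)]
    exact div_lt_div_of_pos_right h (by positivity)
  have := Real.log_lt_log (Real.cosh_pos _) h2
  linarith

lemma w_zero : w 0 = 0 := by simp [w]

lemma w_nonpos (t : ℝ) : w t ≤ 0 := by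
  have := w_anti (t := 0) (u := t) (by simp)
  simpa [w_zero] using this

noncomputable def eta (β : ℝ) : ℝ := Real.sqrt 2 * artanh (Real.sqrt (1 - Real.exp (-β)))

section etaFacts
variable {β : ℝ} (hβ : 0 < β)
include hβ

lemma exp_neg_lt_one : Real.exp (-β) < 1 := by
  rw [Real.exp_lt_one_iff]; linarith

lemma sb_pos : 0 < Real.sqrt (1 - Real.exp (-β)) :=
  Real.sqrt_pos.2 (by linarith [exp_neg_lt_one hβ])

lemma sb_lt_one : Real.sqrt (1 - Real.exp (-β)) < 1 := by
  have h1 : 1 - Real.exp (-β) < 1 := by linarith [Real.exp_pos (-β)]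
  nlinarith [Real.sq_sqrt (by linarith [exp_neg_lt_one hβ] : (0:ℝ) ≤ 1 - Real.exp (-β)),
    Real.sqrt_nonneg (1 - Real.exp (-β))]

lemma eta_pos : 0 < eta β := by
  have hs := sb_pos hβ
  have hs1 := sb_lt_one hβ
  have : 0 < artanh (Real.sqrt (1 - Real.exp (-β))) := by
    rw [artanh]
    have : (1:ℝ) < (1 + Real.sqrt (1 - Real.exp (-β))) / (1 - Real.sqrt (1 - Real.exp (-β))) := by
      rw [lt_div_iff₀ (by linarith)]
      linarith
    have := Real.log_pos this
    linarith
  have h2 : (0:ℝ) < Real.sqrt 2 := by positivity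
  exact mul_pos h2 this

lemma w_eta : w (eta β) = -β := by
  have hs2 : (Real.sqrt 2) ≠ 0 := by positivity
  rw [w, eta, mul_div_cancel_left₀ _ hs2]
  have h0 : (0:ℝ) ≤ 1 - Real.exp (-β) := by linarith [exp_neg_lt_one hβ]
  rw [tanh_artanh (by linarith [sb_pos hβ]) (sb_lt_one hβ), Real.sq_sqrt h0]
  rw [show (1:ℝ) - (1 - Real.exp (-β)) = Real.exp (-β) by ring, Real.log_exp]

end etaFacts

noncomputable def Lam (α β : ℝ) : ℝ := (1 - α) ^ (-2 : ℤ) * Real.exp (-β) * (eta β) ^ 2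

noncomputable def step (α x : ℝ) : ℝ := if |x| < α then 0 else 1

noncomputable def U (α β x : ℝ) : ℝ :=
  if |x| < α then β else w (eta β * (|x| - α) / (1 - α)) + β

noncomputable def Uder (α β x : ℝ) : ℝ :=
  -Real.sqrt 2 * (eta β / (1 - α)) * Real.sign x *
    Real.tanh (eta β / (1 - α) * max (|x| - α) 0 / Real.sqrt 2)

section main
variable {α β : ℝ} (hα0 : 0 < α) (hα1 : α < 1) (hβ : 0 < β)
include hα0 hα1 hβ

lemma U_eq_right : ∀ y, α ≤ y →
    U α β y = w (eta β / (1 - α) * (y - α)) + β := by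
  intro y hy
  have hy0 : 0 < y := lt_of_lt_of_le hα0 hy
  have habs : |y| = y := abs_of_pos hy0
  rw [U, if_neg (by rw [habs]; linarith), habs, mul_div_right_comm]

lemma U_eq_left : ∀ y, y ≤ -α →
    U α β y = w (eta β / (1 - α) * (-y - α)) + β := by
  intro y hy
  have hy0 : y < 0 := by linarith
  have habs : |y| = -y := abs_of_neg hy0
  rw [U, if_neg (by rw [habs]; linarith), habs, mul_div_right_comm]

lemma U_eq_mid : ∀ y, -α ≤ y → y ≤ α → U α β y = β := by
  intro y hy1 hy2
  by_cases h : |y| < α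
  · rw [U, if_pos h]
  · have habs : |y| = α := le_antisymm (abs_le.2 ⟨hy1, hy2⟩) (not_lt.1 h)
    rw [U, if_neg h, habs]
    simp [w_zero]

lemma hVp : ∀ y, HasDerivAt (fun z => w (eta β / (1 - α) * (z - α)) + β)
    (eta β / (1 - α) * (-Real.sqrt 2 *
      Real.tanh (eta β / (1 - α) * (y - α) / Real.sqrt 2))) y := by
  intro y
  have hlin : HasDerivAt (fun z : ℝ => eta β / (1 - α) * (z - α)) (eta β / (1 - α)) y := by
    simpa using ((hasDerivAt_id y).sub_const α).const_mul (eta β / (1 - α))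
  have := ((hasDerivAt_w (eta β / (1 - α) * (y - α))).comp y hlin).add_const β
  refine this.congr_deriv (Eq.symm ?_)
  ring

lemma hVm : ∀ y, HasDerivAt (fun z => w (eta β / (1 - α) * (-z - α)) + β)
    (-(eta β / (1 - α) * (-Real.sqrt 2 *
      Real.tanh (eta β / (1 - α) * (-y - α) / Real.sqrt 2)))) y := by
  intro y
  have hlin : HasDerivAt (fun z : ℝ => eta β / (1 - α) * (-z - α)) (-(eta β / (1 - α))) y := by
    simpa using (((hasDerivAt_id y).neg.sub_const α)).const_mul (eta β / (1 - α))
  have := ((hasDerivAt_w (eta β / (1 - α) * (-y - α))).comp y hlin).add_const β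
  refine this.congr_deriv (Eq.symm ?_)
  ring

lemma Uder_mid : ∀ x, |x| ≤ α → Uder α β x = 0 := by
  intro x hx
  rw [Uder, max_eq_right (by linarith : |x| - α ≤ 0)]
  simp

lemma Uder_right : ∀ x, α ≤ x → Uder α β x =
    eta β / (1 - α) * (-Real.sqrt 2 *
      Real.tanh (eta β / (1 - α) * (x - α) / Real.sqrt 2)) := by
  intro x hx
  have hx0 : 0 < x := lt_of_lt_of_le hα0 hx
  have habs : |x| = x := abs_of_pos hx0
  rw [Uder, habs, Real.sign_of_pos hx0, max_eq_left (by linarith : (0:ℝ) ≤ x - α)]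
  ring

lemma Uder_left : ∀ x, x ≤ -α → Uder α β x =
    -(eta β / (1 - α) * (-Real.sqrt 2 *
      Real.tanh (eta β / (1 - α) * (-x - α) / Real.sqrt 2))) := by
  intro x hx
  have hx0 : x < 0 := by linarith
  have habs : |x| = -x := abs_of_neg hx0
  rw [Uder, habs, Real.sign_of_neg hx0, max_eq_left (by linarith : (0:ℝ) ≤ -x - α)]
  ring

lemma hasDerivAt_U : ∀ x, HasDerivAt (U α β) (Uder α β x) x := by
  intro x
  rcases lt_trichotomy α x with h1 | h1 | h1
  · -- x > α
    have hev : U α β =ᶠ[𝓝 x] fun z => w (eta β / (1 - α) * (z - α)) + β := by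
      filter_upwards [Ioi_mem_nhds h1] with y hy
      exact U_eq_right hα0 hα1 hβ y (le_of_lt hy)
    rw [Uder_right hα0 hα1 hβ x h1.le]
    exact (hVp hα0 hα1 hβ x).congr_of_eventuallyEq hev
  · -- x = α
    subst h1
    have hright : HasDerivWithinAt (U α β) 0 (Set.Ici α) α := by
      have h := (hVp hα0 hα1 hβ α).hasDerivWithinAt (s := Set.Ici α)
      have h0 : eta β / (1 - α) * (-Real.sqrt 2 *
          Real.tanh (eta β / (1 - α) * (α - α) / Real.sqrt 2)) = 0 := by simp
      rw [h0] at h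
      exact h.congr (fun y hy => U_eq_right hα0 hα1 hβ y hy)
        (U_eq_right hα0 hα1 hβ α le_rfl)
    have hleft : HasDerivWithinAt (U α β) 0 (Set.Iic α) α := by
      have hev : U α β =ᶠ[𝓝[Set.Iic α] α] fun _ => β := by
        filter_upwards [self_mem_nhdsWithin,
          mem_nhdsWithin_of_mem_nhds (Ioi_mem_nhds (by linarith : -α < α))] with y hy1 hy2
        exact U_eq_mid hα0 hα1 hβ y (le_of_lt hy2) hy1
      exact (hasDerivWithinAt_const α _ β).congr_of_eventuallyEq hev
        (U_eq_mid hα0 hα1 hβ α (by linarith) le_rfl)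
    have := hleft.union hright
    rw [Set.Iic_union_Ici] at this
    rw [Uder_mid hα0 hα1 hβ α (by rw [abs_of_pos hα0])]
    exact hasDerivWithinAt_univ.1 this
  · rcases lt_trichotomy x (-α) with h2 | h2 | h2
    · -- x < -α
      have hev : U α β =ᶠ[𝓝 x] fun z => w (eta β / (1 - α) * (-z - α)) + β := by
        filter_upwards [Iio_mem_nhds h2] with y hy
        exact U_eq_left hα0 hα1 hβ y (le_of_lt hy)
      rw [Uder_left hα0 hα1 hβ x h2.le]
      exact (hVm hα0 hα1 hβ x).congr_of_eventuallyEq hev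
    · -- x = -α
      subst h2
      have hleft : HasDerivWithinAt (U α β) 0 (Set.Iic (-α)) (-α) := by
        have h := (hVm hα0 hα1 hβ (-α)).hasDerivWithinAt (s := Set.Iic (-α))
        have h0 : -(eta β / (1 - α) * (-Real.sqrt 2 *
            Real.tanh (eta β / (1 - α) * (-(-α) - α) / Real.sqrt 2))) = 0 := by simp
        rw [h0] at h
        exact h.congr (fun y hy => U_eq_left hα0 hα1 hβ y hy)
          (U_eq_left hα0 hα1 hβ (-α) le_rfl)
      have hright : HasDerivWithinAt (U α β) 0 (Set.Ici (-α)) (-α) := by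
        have hev : U α β =ᶠ[𝓝[Set.Ici (-α)] (-α)] fun _ => β := by
          filter_upwards [self_mem_nhdsWithin,
            mem_nhdsWithin_of_mem_nhds (Iio_mem_nhds (by linarith : -α < α))] with y hy1 hy2
          exact U_eq_mid hα0 hα1 hβ y hy1 (le_of_lt hy2)
        exact (hasDerivWithinAt_const (-α) _ β).congr_of_eventuallyEq hev
          (U_eq_mid hα0 hα1 hβ (-α) le_rfl (by linarith))
      have := hleft.union hright
      rw [Set.Iic_union_Ici] at this
      rw [Uder_mid hα0 hα1 hβ (-α) (by rw [abs_neg, abs_of_pos hα0])]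
      exact hasDerivWithinAt_univ.1 this
    · -- -α < x < α
      have hev : U α β =ᶠ[𝓝 x] fun _ => β := by
        filter_upwards [Ioo_mem_nhds h2 h1] with y hy
        exact U_eq_mid hα0 hα1 hβ y hy.1.le hy.2.le
      rw [Uder_mid hα0 hα1 hβ x (abs_le.2 ⟨h2.le, h1.le⟩)]
      exact (hasDerivAt_const x β).congr_of_eventuallyEq hev

lemma continuous_Uder : Continuous (Uder α β) := by
  rw [continuous_iff_continuousAt]
  intro x
  rcases lt_trichotomy x 0 with hx | hx | hx
  · -- x < 0 : sign = -1 eventually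
    have hcont : Continuous fun y : ℝ => -Real.sqrt 2 * (eta β / (1 - α)) * (-1) *
        Real.tanh (eta β / (1 - α) * max (|y| - α) 0 / Real.sqrt 2) := by
      apply Continuous.mul continuous_const
      exact continuous_tanh'.comp
        ((continuous_const.mul
          ((continuous_abs.sub continuous_const).max continuous_const)).div_const _)
    have hev : Uder α β =ᶠ[𝓝 x] fun y => -Real.sqrt 2 * (eta β / (1 - α)) * (-1) *
        Real.tanh (eta β / (1 - α) * max (|y| - α) 0 / Real.sqrt 2) := by
      filter_upwards [Iio_mem_nhds hx] with y hy
      rw [Uder, Real.sign_of_neg hy]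
    exact hcont.continuousAt.congr hev.symm
  · -- x = 0 : locally zero
    subst hx
    have hev : Uder α β =ᶠ[𝓝 (0:ℝ)] fun _ => (0:ℝ) := by
      filter_upwards [Ioo_mem_nhds (by linarith : -α < (0:ℝ)) hα0] with y hy
      exact Uder_mid hα0 hα1 hβ y (abs_le.2 ⟨hy.1.le, hy.2.le⟩)
    exact continuousAt_const.congr hev.symm
  · -- 0 < x
    have hcont : Continuous fun y : ℝ => -Real.sqrt 2 * (eta β / (1 - α)) * 1 *
        Real.tanh (eta β / (1 - α) * max (|y| - α) 0 / Real.sqrt 2) := by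
      apply Continuous.mul continuous_const
      exact continuous_tanh'.comp
        ((continuous_const.mul
          ((continuous_abs.sub continuous_const).max continuous_const)).div_const _)
    have hev : Uder α β =ᶠ[𝓝 x] fun y => -Real.sqrt 2 * (eta β / (1 - α)) * 1 *
        Real.tanh (eta β / (1 - α) * max (|y| - α) 0 / Real.sqrt 2) := by
      filter_upwards [Ioi_mem_nhds hx] with y hy
      rw [Uder, Real.sign_of_pos hy]
    exact hcont.continuousAt.congr hev.symm

lemma deriv_U_eq : deriv (U α β) = Uder α β :=
  funext fun x => (hasDerivAt_U hα0 hα1 hβ x).deriv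

lemma contDiff_U : ContDiff ℝ 1 (U α β) :=
  contDiff_one_iff_deriv.2 ⟨fun x => (hasDerivAt_U hα0 hα1 hβ x).differentiableAt,
    by rw [deriv_U_eq hα0 hα1 hβ]; exact continuous_Uder hα0 hα1 hβ⟩

end main

section ode
variable {α β : ℝ} (hα0 : 0 < α) (hα1 : α < 1) (hβ : 0 < β)
include hα0 hα1 hβ

lemma deriv_Uder_mid : ∀ x, |x| < α → deriv (Uder α β) x = 0 := by
  intro x hx
  obtain ⟨h1, h2⟩ := abs_lt.1 hx
  have hev : Uder α β =ᶠ[𝓝 x] fun _ => (0:ℝ) := by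
    filter_upwards [Ioo_mem_nhds h1 h2] with y hy
    exact Uder_mid hα0 hα1 hβ y (abs_le.2 ⟨hy.1.le, hy.2.le⟩)
  rw [hev.deriv_eq, deriv_const]

lemma deriv_Uder_right : ∀ x, α < x → deriv (Uder α β) x =
    eta β / (1 - α) * (-Real.sqrt 2 *
      ((Real.cosh (eta β / (1 - α) * (x - α) / Real.sqrt 2) ^ 2)⁻¹ *
        (eta β / (1 - α) / Real.sqrt 2))) := by
  intro x hx
  have hev : Uder α β =ᶠ[𝓝 x] fun y => eta β / (1 - α) * (-Real.sqrt 2 *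
      Real.tanh (eta β / (1 - α) * (y - α) / Real.sqrt 2)) := by
    filter_upwards [Ioi_mem_nhds hx] with y hy
    exact Uder_right hα0 hα1 hβ y hy.le
  have hlin : HasDerivAt (fun y : ℝ => eta β / (1 - α) * (y - α) / Real.sqrt 2)
      (eta β / (1 - α) / Real.sqrt 2) x := by
    simpa using (((hasDerivAt_id x).sub_const α).const_mul (eta β / (1 - α))).div_const
      (Real.sqrt 2)
  have hT := (((hasDerivAt_tanh _).comp x hlin).const_mul (-Real.sqrt 2)).const_mul
      (eta β / (1 - α))
  rw [hev.deriv_eq]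
  exact hT.deriv

lemma deriv_Uder_left : ∀ x, x < -α → deriv (Uder α β) x =
    -(eta β / (1 - α) * (-Real.sqrt 2 *
      ((Real.cosh (eta β / (1 - α) * (-x - α) / Real.sqrt 2) ^ 2)⁻¹ *
        (-(eta β / (1 - α)) / Real.sqrt 2)))) := by
  intro x hx
  have hev : Uder α β =ᶠ[𝓝 x] fun y => -(eta β / (1 - α) * (-Real.sqrt 2 *
      Real.tanh (eta β / (1 - α) * (-y - α) / Real.sqrt 2))) := by
    filter_upwards [Iio_mem_nhds hx] with y hy
    exact Uder_left hα0 hα1 hβ y hy.le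
  have hlin : HasDerivAt (fun y : ℝ => eta β / (1 - α) * (-y - α) / Real.sqrt 2)
      (-(eta β / (1 - α)) / Real.sqrt 2) x := by
    simpa using ((((hasDerivAt_id x).neg.sub_const α)).const_mul (eta β / (1 - α))).div_const
      (Real.sqrt 2)
  have hT := ((((hasDerivAt_tanh _).comp x hlin).const_mul (-Real.sqrt 2)).const_mul
      (eta β / (1 - α))).neg
  rw [hev.deriv_eq]
  exact hT.deriv

lemma Lam_eq : Lam α β = (eta β / (1 - α)) ^ 2 * Real.exp (-β) := by
  have h1 : (1:ℝ) - α ≠ 0 := by linarith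
  rw [Lam, zpow_neg]
  rw [show ((1:ℝ) - α) ^ (2:ℤ) = (1 - α) ^ (2:ℕ) from zpow_ofNat _ 2]
  field_simp

lemma exp_U_right : ∀ x, α ≤ x → Real.exp (U α β x) =
    (Real.cosh (eta β / (1 - α) * (x - α) / Real.sqrt 2) ^ 2)⁻¹ * Real.exp β := by
  intro x hx
  rw [U_eq_right hα0 hα1 hβ x hx, Real.exp_add, w]
  rw [Real.exp_log (by nlinarith [tanh_sq_lt_one (eta β / (1 - α) * (x - α) / Real.sqrt 2)])]
  rw [one_sub_tanh_sq]

lemma exp_U_left : ∀ x, x ≤ -α → Real.exp (U α β x) =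
    (Real.cosh (eta β / (1 - α) * (-x - α) / Real.sqrt 2) ^ 2)⁻¹ * Real.exp β := by
  intro x hx
  rw [U_eq_left hα0 hα1 hβ x hx, Real.exp_add, w]
  rw [Real.exp_log (by nlinarith [tanh_sq_lt_one (eta β / (1 - α) * (-x - α) / Real.sqrt 2)])]
  rw [one_sub_tanh_sq]

lemma ode_right : ∀ x, α < x →
    deriv (deriv (U α β)) x + Lam α β * step α x * Real.exp (U α β x) = 0 := by
  intro x hx
  have hxa : |x| = x := abs_of_pos (by linarith)
  rw [deriv_U_eq hα0 hα1 hβ, deriv_Uder_right hα0 hα1 hβ x hx,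
    step, if_neg (by rw [hxa]; linarith), exp_U_right hα0 hα1 hβ x hx.le, Lam_eq hα0 hα1 hβ]
  have hs2 : Real.sqrt 2 ≠ 0 := by positivity
  have hK : Real.cosh (eta β / (1 - α) * (x - α) / Real.sqrt 2) ^ 2 ≠ 0 := by positivity
  have hee : Real.exp (-β) * Real.exp β = 1 := by
    rw [← Real.exp_add]; simp
  set c := eta β / (1 - α) with hc
  set K := Real.cosh (c * (x - α) / Real.sqrt 2) ^ 2 with hKdef
  have key : c * (-Real.sqrt 2 * (K⁻¹ * (c / Real.sqrt 2))) = -(c ^ 2 * K⁻¹) := by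
    field_simp
  rw [key]
  have key2 : c ^ 2 * Real.exp (-β) * 1 * (K⁻¹ * Real.exp β) = c ^ 2 * K⁻¹ := by
    calc c ^ 2 * Real.exp (-β) * 1 * (K⁻¹ * Real.exp β)
        = c ^ 2 * K⁻¹ * (Real.exp (-β) * Real.exp β) := by ring
      _ = c ^ 2 * K⁻¹ := by rw [hee, mul_one]
  rw [key2]
  ring

lemma ode_left : ∀ x, x < -α →
    deriv (deriv (U α β)) x + Lam α β * step α x * Real.exp (U α β x) = 0 := by
  intro x hx
  have hxa : |x| = -x := abs_of_neg (by linarith)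
  rw [deriv_U_eq hα0 hα1 hβ, deriv_Uder_left hα0 hα1 hβ x hx,
    step, if_neg (by rw [hxa]; linarith), exp_U_left hα0 hα1 hβ x hx.le, Lam_eq hα0 hα1 hβ]
  have hs2 : Real.sqrt 2 ≠ 0 := by positivity
  have hK : Real.cosh (eta β / (1 - α) * (-x - α) / Real.sqrt 2) ^ 2 ≠ 0 := by positivity
  have hee : Real.exp (-β) * Real.exp β = 1 := by
    rw [← Real.exp_add]; simp
  set c := eta β / (1 - α) with hc
  set K := Real.cosh (c * (-x - α) / Real.sqrt 2) ^ 2 with hKdef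
  have key : -(c * (-Real.sqrt 2 * (K⁻¹ * (-c / Real.sqrt 2)))) = -(c ^ 2 * K⁻¹) := by
    field_simp
  rw [key]
  have key2 : c ^ 2 * Real.exp (-β) * 1 * (K⁻¹ * Real.exp β) = c ^ 2 * K⁻¹ := by
    calc c ^ 2 * Real.exp (-β) * 1 * (K⁻¹ * Real.exp β)
        = c ^ 2 * K⁻¹ * (Real.exp (-β) * Real.exp β) := by ring
      _ = c ^ 2 * K⁻¹ := by rw [hee, mul_one]
  rw [key2]
  ring

end ode

theorem stmt_7 (α β : ℝ) (hα : 0 < α ∧ α < 1) (hβ : 0 < β) :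
    (∀ x ∈ Set.Ioo (-1 : ℝ) 1, 0 < U α β x) ∧
    (∀ x : ℝ, U α β (-x) = U α β x) ∧
    ContDiffOn ℝ 1 (U α β) (Set.Icc (-1) 1) ∧
    U α β (-1) = 0 ∧ U α β 1 = 0 ∧
    (∀ x ∈ Set.Ioo (-1 : ℝ) 1 \ {-α, α},
      deriv (deriv (U α β)) x + Lam α β * step α x * Real.exp (U α β x) = 0) ∧
    (∀ x ∈ Set.Icc (-1 : ℝ) 1, |U α β x| ≤ β) ∧
    (∃ x ∈ Set.Icc (-1 : ℝ) 1, |U α β x| = β) := by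
  obtain ⟨hα0, hα1⟩ := hα
  have h1α : (0:ℝ) < 1 - α := by linarith
  have hη := eta_pos hβ
  have hwη := w_eta hβ
  refine ⟨?_, ?_, ?_, ?_, ?_, ?_, ?_, ?_⟩
  · -- positivity
    intro x hx
    obtain ⟨hx1, hx2⟩ := hx
    by_cases h : |x| < α
    · rw [U, if_pos h]; exact hβ
    · push_neg at h
      have hxlt : |x| < 1 := abs_lt.2 ⟨hx1, hx2⟩
      rw [U, if_neg (not_lt.2 h)]
      set t := eta β * (|x| - α) / (1 - α) with ht
      have ht1 : 0 ≤ t := by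
        apply div_nonneg _ h1α.le
        exact mul_nonneg hη.le (by linarith)
      have ht2 : t < eta β := by
        rw [ht, div_lt_iff₀ h1α]
        have : |x| - α < 1 - α := by linarith
        calc eta β * (|x| - α) < eta β * (1 - α) := by
              exact mul_lt_mul_of_pos_left this hη
          _ = eta β * (1 - α) := rfl
      have hw : w (eta β) < w t := by
        apply w_anti_strict
        rw [abs_of_nonneg ht1, abs_of_pos hη]
        exact ht2
      rw [hwη] at hw
      linarith
  · -- evenness
    intro x
    simp [U, abs_neg]
  · -- C¹
    exact (contDiff_U hα0 hα1 hβ).contDiffOn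
  · -- U(-1) = 0
    rw [U_eq_left hα0 hα1 hβ (-1) (by linarith)]
    rw [show -(-1:ℝ) - α = 1 - α by ring, div_mul_cancel₀ _ h1α.ne', hwη]
    ring
  · -- U(1) = 0
    rw [U_eq_right hα0 hα1 hβ 1 hα1.le, div_mul_cancel₀ _ h1α.ne', hwη]
    ring
  · -- ODE
    intro x hx
    obtain ⟨⟨hx1, hx2⟩, hxn⟩ := hx
    simp only [Set.mem_insert_iff, Set.mem_singleton_iff] at hxn
    push_neg at hxn
    by_cases h : |x| < α
    · rw [deriv_U_eq hα0 hα1 hβ, deriv_Uder_mid hα0 hα1 hβ x h, step, if_pos h]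
      ring
    · push_neg at h
      rcases le_or_gt 0 x with hx0 | hx0
      · have : α < x := by
          rcases lt_or_eq_of_le h with h' | h'
          · rwa [abs_of_nonneg hx0] at h'
          · exfalso; exact hxn.2 (by rw [← abs_of_nonneg hx0, ← h'])
        exact ode_right hα0 hα1 hβ x this
      · have : x < -α := by
          rcases lt_or_eq_of_le h with h' | h'
          · rw [abs_of_neg hx0] at h'; linarith
          · exfalso
            apply hxn.1
            rw [abs_of_neg hx0] at h'
            linarith
        exact ode_left hα0 hα1 hβ x this
  · -- bound
    intro x hx
    obtain ⟨hx1, hx2⟩ := hx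
    by_cases h : |x| < α
    · rw [U, if_pos h, abs_of_pos hβ]
    · push_neg at h
      have hxle : |x| ≤ 1 := abs_le.2 ⟨hx1, hx2⟩
      rw [U, if_neg (not_lt.2 h)]
      set t := eta β * (|x| - α) / (1 - α) with ht
      have ht1 : 0 ≤ t := by
        apply div_nonneg _ h1α.le
        exact mul_nonneg hη.le (by linarith)
      have ht2 : t ≤ eta β := by
        rw [ht, div_le_iff₀ h1α]
        calc eta β * (|x| - α) ≤ eta β * (1 - α) :=
              mul_le_mul_of_nonneg_left (by linarith) hη.le
          _ = eta β * (1 - α) := rfl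
      have hw : w (eta β) ≤ w t := by
        apply w_anti
        rw [abs_of_nonneg ht1, abs_of_pos hη]
        exact ht2
      rw [hwη] at hw
      have hw0 := w_nonpos t
      rw [abs_le]
      constructor <;> linarith
  · -- attained
    refine ⟨0, ⟨by norm_num, by norm_num⟩, ?_⟩
    rw [U, if_pos (by simpa using hα0), abs_of_pos hβ]
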